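/- Let F be a quasi-linear map on a normed space E and X_F = ℝ × E with quasi-norm ‖(r,x)‖ = |r - F(x)| + ‖x‖. Suppose ν is a nearly convex vector topology on ℝ × E weaker than the quasi-norm topology, and suppose ℝ × {0} is not complemented in X_F. Then every ν-neighborhood U of 0 contains a set of the form {(r,x) : ‖x‖ < ε} for some ε > 0. -/

import Mathlib

open Filter Topology

private lemma aux_mem_of_mem_closure_zero {G : Type*} [AddCommGroup G] [t : TopologicalSpace G]
    [IsTopologicalAddGroup G] {a : G} (ha : a ∈ closure ({0} : Set G))
    {V : Set G} (hV : V ∈ 𝓝 (0 : G)) : a ∈ V := by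
  have h1 : (0 : G) ⤳ a := specializes_iff_mem_closure.mpr ha
  have h2 : a ⤳ (0 : G) := h1.symm
  exact mem_of_mem_nhds (h2 hV)

theorem nearly_convex_weaker_topology_contains_tube
    {E : Type*} [NormedAddCommGroup E] [NormedSpace ℝ E]
    (F : E → ℝ) (C : ℝ)
    (hhom : ∀ (r : ℝ) (x : E), F (r • x) = r * F x)
    (hq : ∀ x y : E, |F (x + y) - F x - F y| ≤ C * (‖x‖ + ‖y‖))
    -- τ is the quasi-norm topology of ‖(r,x)‖_F = |r - F x| + ‖x‖ :
    (τ : TopologicalSpace (ℝ × E))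
    (hτadd : @IsTopologicalAddGroup (ℝ × E) τ _)
    (hτsmul : @ContinuousSMul ℝ (ℝ × E) _ _ τ)
    (hτbasis : (@nhds (ℝ × E) τ 0).HasBasis (fun ε : ℝ => 0 < ε)
      (fun ε => {p : ℝ × E | |p.1 - F p.2| + ‖p.2‖ < ε}))
    -- ν is a nearly convex vector topology weaker than τ :
    (ν : TopologicalSpace (ℝ × E))
    (hνadd : @IsTopologicalAddGroup (ℝ × E) ν _)
    (hνsmul : @ContinuousSMul ℝ (ℝ × E) _ _ ν)
    (hweaker : τ ≤ ν)
    (hnc : ∀ p : ℝ × E, p ∉ @closure (ℝ × E) ν {0} →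
      ∃ f : (ℝ × E) →ₗ[ℝ] ℝ, @Continuous (ℝ × E) ℝ ν _ f ∧ f p ≠ 0)
    -- ℝ × {0} is not complemented in X_F :
    (hnotcompl : ¬ ∃ P : (ℝ × E) →ₗ[ℝ] (ℝ × E),
        @Continuous (ℝ × E) (ℝ × E) τ τ P ∧ (∀ w, P (P w) = P w) ∧
        LinearMap.range P = (⊤ : Submodule ℝ ℝ).prod (⊥ : Submodule ℝ E)) :
    ∀ U ∈ @nhds (ℝ × E) ν 0, ∃ ε > 0, {p : ℝ × E | ‖p.2‖ < ε} ⊆ U := by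
  -- Step 1: ℝ × {0} is contained in the ν-closure of {0}.
  have hclo : ∀ r : ℝ, ((r, 0) : ℝ × E) ∈ @closure _ ν {0} := by
    intro r
    by_contra h
    obtain ⟨f, hf, hf0⟩ := hnc _ h
    -- f (1,0) ≠ 0
    have hre : ((r, 0) : ℝ × E) = r • ((1 : ℝ), (0 : E)) := by simp
    have hc : f ((1 : ℝ), (0 : E)) ≠ 0 := by
      intro h0
      apply hf0
      rw [hre, map_smul, h0, smul_zero]
    set c : ℝ := f ((1 : ℝ), (0 : E)) with hcdef
    set v : ℝ × E := c⁻¹ • ((1 : ℝ), (0 : E)) with hvdef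
    have hfv : f v = 1 := by
      rw [hvdef, map_smul, smul_eq_mul, ← hcdef, inv_mul_cancel₀ hc]
    set P : (ℝ × E) →ₗ[ℝ] (ℝ × E) := (LinearMap.toSpanSingleton ℝ (ℝ × E) v).comp f with hPdef
    have hPapp : ∀ w, P w = f w • v := fun w => rfl
    apply hnotcompl
    refine ⟨P, ?_, ?_, ?_⟩
    · -- τ-continuity
      have hfτ : @Continuous _ _ τ _ f := continuous_le_dom hweaker hf
      letI := τ
      haveI := hτadd
      haveI := hτsmul
      exact (continuous_id.smul continuous_const).comp hfτ
    · intro w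
      show f (f w • v) • v = f w • v
      rw [map_smul, hfv, smul_eq_mul, mul_one]
    · ext w
      simp only [LinearMap.mem_range, Submodule.mem_prod, Submodule.mem_top,
        Submodule.mem_bot, true_and]
      constructor
      · rintro ⟨u, rfl⟩
        have : v.2 = 0 := by simp [hvdef]
        show (f u • v).2 = 0
        rw [Prod.smul_snd, this, smul_zero]
      · intro hw2
        refine ⟨w.1 • ((1 : ℝ), (0 : E)), ?_⟩
        rw [hPapp, map_smul, smul_eq_mul, ← hcdef, hvdef, smul_smul,
          mul_assoc, mul_inv_cancel₀ hc, mul_one]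
        ext <;> simp [hw2]
  -- Step 2: main argument
  intro U hU
  obtain ⟨V, hV, hVU⟩ := by
    letI := ν
    haveI := hνadd
    exact exists_nhds_zero_half hU
  have hVτ : V ∈ @nhds _ τ 0 := nhds_mono hweaker hV
  obtain ⟨ε, hε, hball⟩ := (hτbasis.mem_iff).mp hVτ
  refine ⟨ε, hε, ?_⟩
  rintro ⟨r, x⟩ hx
  have h1 : ((F x, x) : ℝ × E) ∈ V := by
    apply hball
    simp only [Set.mem_setOf_eq, sub_self, abs_zero, zero_add]
    exact hx
  have h2 : ((r - F x, 0) : ℝ × E) ∈ V := by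
    letI := ν
    haveI := hνadd
    exact aux_mem_of_mem_closure_zero (hclo (r - F x)) hV
  have := hVU _ h2 _ h1
  simpa using this
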